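/- Under the Setup, for any support point θ* ∈ S(p,Θ_I) the following are equivalent: (i) there exists c > 0 such that p·t ≤ −c‖t‖ for every t in the linearized cone L(θ*); (ii) the infimum, over all unit vectors t ∈ ℝ^d with p·t ≥ 0, of max{ max_{j∈J1*(θ*)} D_j(θ*)·t , max_{J1<j≤J} |D_j(θ*)·t| } is strictly positive. -/
import Mathlib


open Filter Topology Metric RealInnerProductSpace

noncomputable section

/-- The abstract Setup (Assumption 1) of Kaido–Molinari–Stoye: a compact convex parameter
space `Θ ⊆ ℝ^d` with nonempty interior, `J` continuously differentiable constraint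
functions `g j` (inequality constraints for `j < J1`, equality constraints for
`J1 ≤ j`), with (continuous) gradients `D j`, and a direction of projection `p ≠ 0`. -/
structure PISetup (d J J1 : ℕ) where
  Θ : Set (EuclideanSpace ℝ (Fin d))
  g : Fin J → EuclideanSpace ℝ (Fin d) → ℝ
  D : Fin J → EuclideanSpace ℝ (Fin d) → EuclideanSpace ℝ (Fin d)
  p : EuclideanSpace ℝ (Fin d)
  hd : 1 ≤ d
  hJ : 1 ≤ J
  hJ1 : J1 ≤ J
  compactΘ : IsCompact Θ
  convexΘ : Convex ℝ Θ
  intΘ_nonempty : (interior Θ).Nonempty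
  hgrad : ∀ (j : Fin J) (θ : EuclideanSpace ℝ (Fin d)), HasGradientAt (g j) (D j θ) θ
  hgradCont : ∀ j : Fin J, Continuous (D j)
  hp : p ≠ 0

namespace PISetup

variable {d J J1 : ℕ}

/-- The identified set `Θ_I`. -/
def idSet (S : PISetup d J J1) : Set (EuclideanSpace ℝ (Fin d)) :=
  {θ ∈ S.Θ | ∀ j : Fin J, ((j : ℕ) < J1 → S.g j θ ≤ 0) ∧ (J1 ≤ (j : ℕ) → S.g j θ = 0)}

/-- The support set `S(p, Θ_I)`: the maximizers of `θ ↦ ⟪p, θ⟫` over `Θ_I`. -/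
def suppSet (S : PISetup d J J1) : Set (EuclideanSpace ℝ (Fin d)) :=
  {θ ∈ S.idSet | ∀ θ' ∈ S.idSet, ⟪S.p, θ'⟫ ≤ ⟪S.p, θ⟫}

/-- The criterion `Q(θ) = max{0, max_{j< J1} g_j(θ), max_{J1 ≤ j} |g_j(θ)|}`. -/
def crit (S : PISetup d J J1) (θ : EuclideanSpace ℝ (Fin d)) : ℝ :=
  max 0 (⨆ j : Fin J, if (j : ℕ) < J1 then S.g j θ else |S.g j θ|)

/-- The ball `B(θ*, η) = {θ ∈ Θ : ‖θ - θ*‖ ≤ η}`. -/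
def ball (S : PISetup d J J1) (θs : EuclideanSpace ℝ (Fin d)) (η : ℝ) :
    Set (EuclideanSpace ℝ (Fin d)) :=
  {θ ∈ S.Θ | ‖θ - θs‖ ≤ η}

/-- The supporting hyperplane `H(p, Θ_I)`, described relative to a support point `θ*`. -/
def hyper (S : PISetup d J J1) (θs : EuclideanSpace ℝ (Fin d)) :
    Set (EuclideanSpace ℝ (Fin d)) :=
  {θ ∈ S.Θ | ⟪S.p, θ⟫ = ⟪S.p, θs⟫}

/-- The tangent cone `T(θ*)` to `Θ_I` at `θ*`. -/
def tangentConeAt (S : PISetup d J J1) (θs : EuclideanSpace ℝ (Fin d)) :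
    Set (EuclideanSpace ℝ (Fin d)) :=
  insert 0 {t | ∃ u : ℕ → EuclideanSpace ℝ (Fin d),
    (∀ n, u n ∈ S.idSet ∧ u n ≠ θs) ∧ Tendsto u atTop (𝓝 θs) ∧
    Tendsto (fun n => ‖u n - θs‖⁻¹ • (u n - θs)) atTop (𝓝 (‖t‖⁻¹ • t))}

/-- The linearized cone `L(θ*)`. -/
def linConeAt (S : PISetup d J J1) (θs : EuclideanSpace ℝ (Fin d)) :
    Set (EuclideanSpace ℝ (Fin d)) :=
  {t | (∀ j : Fin J, (j : ℕ) < J1 → S.g j θs = 0 → ⟪S.D j θs, t⟫ ≤ 0) ∧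
       (∀ j : Fin J, J1 ≤ (j : ℕ) → ⟪S.D j θs, t⟫ = 0)}

/-- The active set `J*(θ)` of (equality or inequality) constraints. -/
def activeAt (S : PISetup d J J1) (θ : EuclideanSpace ℝ (Fin d)) : Set (Fin J) :=
  {j | ((j : ℕ) < J1 ∧ S.g j θ = 0) ∨ J1 ≤ (j : ℕ)}

end PISetup

/-- Display (7) of the paper: at any support point, Assumption 7′ is equivalent to the
infimum over unit vectors `t` with `p·t ≥ 0` of
`max{max_{j ∈ J1*(θ*)} D_j(θ*)·t, max_{J1<j≤J} |D_j(θ*)·t|}` being strictly positive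
(the positivity of the infimum is rendered as: there is `ε > 0` below all the maxima,
i.e. each feasible `t` has an active inequality constraint with `D_j(θ*)·t ≥ ε` or an
equality constraint with `|D_j(θ*)·t| ≥ ε`). -/
theorem assumption7'_iff_positive_inf {d J J1 : ℕ} (S : PISetup d J J1)
    (hIne : S.idSet.Nonempty) (hIint : S.idSet ⊆ interior S.Θ)
    (θs : EuclideanSpace ℝ (Fin d)) (hθs : θs ∈ S.suppSet) :
    (∃ c > (0:ℝ), ∀ t ∈ S.linConeAt θs, ⟪S.p, t⟫ ≤ -c * ‖t‖) ↔
    (∃ ε > (0:ℝ), ∀ t : EuclideanSpace ℝ (Fin d), ‖t‖ = 1 → 0 ≤ ⟪S.p, t⟫ →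
        ∃ j : Fin J, ((j : ℕ) < J1 ∧ S.g j θs = 0 ∧ ε ≤ ⟪S.D j θs, t⟫) ∨
          (J1 ≤ (j : ℕ) ∧ ε ≤ |⟪S.D j θs, t⟫|)) := by
  haveI : Nonempty (Fin J) := ⟨⟨0, S.hJ⟩⟩
  have hne : (Finset.univ : Finset (Fin J)).Nonempty := Finset.univ_nonempty
  -- the coordinate functions
  set φ : Fin J → EuclideanSpace ℝ (Fin d) → ℝ := fun j t =>
    if (j : ℕ) < J1 ∧ S.g j θs = 0 then ⟪S.D j θs, t⟫
    else if J1 ≤ (j : ℕ) then |⟪S.D j θs, t⟫| else 0 with hφ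
  have hφcont : ∀ j : Fin J, Continuous (φ j) := by
    intro j
    have hin : Continuous fun t : EuclideanSpace ℝ (Fin d) => ⟪S.D j θs, t⟫ :=
      continuous_const.inner continuous_id
    by_cases h1 : (j : ℕ) < J1 ∧ S.g j θs = 0
    · simpa [hφ, h1] using hin
    · by_cases h2 : J1 ≤ (j : ℕ)
      · simpa [hφ, h1, h2] using hin.abs
      · simp [hφ, h1, h2]; exact continuous_const
  set F : EuclideanSpace ℝ (Fin d) → ℝ := fun t =>
    Finset.univ.sup' hne (fun j => φ j t) with hF
  have hFcont : Continuous F :=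
    Continuous.finset_sup'_apply hne (fun j _ => hφcont j)
  have hinner : Continuous fun t : EuclideanSpace ℝ (Fin d) => ⟪S.p, t⟫ :=
    continuous_const.inner continuous_id
  constructor
  · rintro ⟨c, hc, hC⟩
    set K : Set (EuclideanSpace ℝ (Fin d)) :=
      Metric.sphere 0 1 ∩ {t | 0 ≤ ⟪S.p, t⟫} with hK
    have hKc : IsCompact K :=
      (isCompact_sphere 0 1).inter_right (isClosed_le continuous_const hinner)
    have hpne : ‖S.p‖ ≠ 0 := norm_ne_zero_iff.mpr S.hp
    have hKne : K.Nonempty := by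
      refine ⟨‖S.p‖⁻¹ • S.p, ?_, ?_⟩
      · simp [norm_smul, abs_of_nonneg (inv_nonneg.mpr (norm_nonneg S.p)),
          inv_mul_cancel₀ hpne]
      · simp only [Set.mem_setOf_eq, real_inner_smul_right, real_inner_self_eq_norm_sq]
        positivity
    -- any t ∈ K is positive under F
    have hFpos : ∀ t ∈ K, 0 < F t := by
      rintro t ⟨ht1, ht2⟩
      have htn : ‖t‖ = 1 := by simpa using ht1
      have htL : t ∉ S.linConeAt θs := by
        intro htL
        have := hC t htL
        rw [htn] at this
        have ht2' : 0 ≤ ⟪S.p, t⟫ := ht2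
        nlinarith
      simp only [PISetup.linConeAt, Set.mem_setOf_eq, not_and_or] at htL
      rcases htL with h | h
      · push_neg at h
        obtain ⟨j, hj1, hj2, hj3⟩ := h
        have : φ j t = ⟪S.D j θs, t⟫ := by simp [hφ, hj1, hj2]
        calc (0:ℝ) < φ j t := by rw [this]; linarith
          _ ≤ F t := Finset.le_sup' (fun j => φ j t) (Finset.mem_univ j)
      · push_neg at h
        obtain ⟨j, hj1, hj2⟩ := h
        have : φ j t = |⟪S.D j θs, t⟫| := by
          have : ¬ ((j : ℕ) < J1 ∧ S.g j θs = 0) := fun hh => absurd hh.1 (not_lt.mpr hj1)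
          simp [hφ, this, hj1]
        calc (0:ℝ) < φ j t := by rw [this]; exact abs_pos.mpr hj2
          _ ≤ F t := Finset.le_sup' (fun j => φ j t) (Finset.mem_univ j)
    obtain ⟨t₀, ht₀K, ht₀min⟩ := hKc.exists_isMinOn hKne hFcont.continuousOn
    refine ⟨F t₀, hFpos t₀ ht₀K, ?_⟩
    intro t htn htp
    have htK : t ∈ K := ⟨by simpa using htn, htp⟩
    have hle : F t₀ ≤ F t := ht₀min htK
    obtain ⟨j, -, hj⟩ := Finset.exists_mem_eq_sup' hne (fun j => φ j t)
    have hFt : F t = φ j t := hj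
    have hle2 : F t₀ ≤ φ j t := hle.trans_eq hFt
    clear hle
    rename' hle2 => hle
    refine ⟨j, ?_⟩
    by_cases h1 : (j : ℕ) < J1 ∧ S.g j θs = 0
    · left
      refine ⟨h1.1, h1.2, ?_⟩
      simpa [hφ, h1] using hle
    · by_cases h2 : J1 ≤ (j : ℕ)
      · right
        refine ⟨h2, ?_⟩
        simpa [hφ, h1, h2] using hle
      · exfalso
        have : φ j t = 0 := by simp [hφ, h1, h2]
        rw [this] at hle
        exact absurd (lt_of_lt_of_le (hFpos t₀ ht₀K) hle) (lt_irrefl 0)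
  · rintro ⟨ε, hε, hE⟩
    -- L is a cone
    have hcone : ∀ t ∈ S.linConeAt θs, ∀ r : ℝ, 0 ≤ r → r • t ∈ S.linConeAt θs := by
      rintro t ⟨h1, h2⟩ r hr
      constructor
      · intro j hj hg
        rw [real_inner_smul_right]
        exact mul_nonpos_of_nonneg_of_nonpos hr (h1 j hj hg)
      · intro j hj
        rw [real_inner_smul_right, h2 j hj, mul_zero]
    -- unit vectors in L have negative inner product with p
    have hneg : ∀ t ∈ S.linConeAt θs, ‖t‖ = 1 → ⟪S.p, t⟫ < 0 := by
      intro t htL htn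
      by_contra h
      push_neg at h
      obtain ⟨j, hj⟩ := hE t htn h
      rcases hj with ⟨hj1, hj2, hj3⟩ | ⟨hj1, hj2⟩
      · have := htL.1 j hj1 hj2; linarith
      · have := htL.2 j hj1
        rw [this] at hj2; simp at hj2; linarith
    -- L is closed
    have hLclosed : IsClosed (S.linConeAt θs) := by
      have : S.linConeAt θs =
          (⋂ j : Fin J, {t : EuclideanSpace ℝ (Fin d) |
              (j : ℕ) < J1 → S.g j θs = 0 → ⟪S.D j θs, t⟫ ≤ 0}) ∩
          (⋂ j : Fin J, {t : EuclideanSpace ℝ (Fin d) |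
              J1 ≤ (j : ℕ) → ⟪S.D j θs, t⟫ = 0}) := by
        ext t
        simp only [PISetup.linConeAt, Set.mem_setOf_eq, Set.mem_inter_iff, Set.mem_iInter]
      rw [this]
      apply IsClosed.inter
      · apply isClosed_iInter
        intro j
        have hin : Continuous fun t : EuclideanSpace ℝ (Fin d) => ⟪S.D j θs, t⟫ :=
          continuous_const.inner continuous_id
        by_cases h1 : (j : ℕ) < J1 ∧ S.g j θs = 0
        · have : {t : EuclideanSpace ℝ (Fin d) |
              (j : ℕ) < J1 → S.g j θs = 0 → ⟪S.D j θs, t⟫ ≤ 0} =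
              {t | ⟪S.D j θs, t⟫ ≤ 0} := by ext t; simp [h1.1, h1.2]
          rw [this]; exact isClosed_le hin continuous_const
        · have : {t : EuclideanSpace ℝ (Fin d) |
              (j : ℕ) < J1 → S.g j θs = 0 → ⟪S.D j θs, t⟫ ≤ 0} = Set.univ := by
            ext t; simp only [Set.mem_setOf_eq, Set.mem_univ, iff_true]
            intro ha hb; exact absurd ⟨ha, hb⟩ h1
          rw [this]; exact isClosed_univ
      · apply isClosed_iInter
        intro j
        have hin : Continuous fun t : EuclideanSpace ℝ (Fin d) => ⟪S.D j θs, t⟫ :=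
          continuous_const.inner continuous_id
        by_cases h2 : J1 ≤ (j : ℕ)
        · have : {t : EuclideanSpace ℝ (Fin d) | J1 ≤ (j : ℕ) → ⟪S.D j θs, t⟫ = 0} =
              {t | ⟪S.D j θs, t⟫ = 0} := by ext t; simp [h2]
          rw [this]; exact isClosed_eq hin continuous_const
        · have : {t : EuclideanSpace ℝ (Fin d) | J1 ≤ (j : ℕ) → ⟪S.D j θs, t⟫ = 0} =
              Set.univ := by ext t; simp [h2]
          rw [this]; exact isClosed_univ
    set K' : Set (EuclideanSpace ℝ (Fin d)) :=
      Metric.sphere 0 1 ∩ S.linConeAt θs with hK'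
    have hK'c : IsCompact K' := (isCompact_sphere 0 1).inter_right hLclosed
    by_cases hK'ne : K'.Nonempty
    · obtain ⟨t₀, ht₀K, ht₀max⟩ := hK'c.exists_isMaxOn hK'ne hinner.continuousOn
      have ht₀n : ‖t₀‖ = 1 := by simpa using ht₀K.1
      have hm : ⟪S.p, t₀⟫ < 0 := hneg t₀ ht₀K.2 ht₀n
      refine ⟨-⟪S.p, t₀⟫, by linarith, ?_⟩
      intro t htL
      rcases eq_or_ne t 0 with rfl | htz
      · simp
      · have htn : ‖t‖ ≠ 0 := norm_ne_zero_iff.mpr htz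
        set u := ‖t‖⁻¹ • t with hu
        have huL : u ∈ S.linConeAt θs := hcone t htL _ (inv_nonneg.mpr (norm_nonneg t))
        have hun : ‖u‖ = 1 := by
          simp [hu, norm_smul, abs_of_nonneg (inv_nonneg.mpr (norm_nonneg t)),
            inv_mul_cancel₀ htn]
        have huK : u ∈ K' := ⟨by simpa using hun, huL⟩
        have hub : ⟪S.p, u⟫ ≤ ⟪S.p, t₀⟫ := ht₀max huK
        have hiu : ⟪S.p, u⟫ = ‖t‖⁻¹ * ⟪S.p, t⟫ := real_inner_smul_right _ _ _
        rw [hiu] at hub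
        have this := hub
        have hpos : (0:ℝ) < ‖t‖ := lt_of_le_of_ne (norm_nonneg t) (Ne.symm htn)
        calc ⟪S.p, t⟫ = ‖t‖ * (‖t‖⁻¹ * ⟪S.p, t⟫) := by field_simp
          _ ≤ ‖t‖ * ⟪S.p, t₀⟫ := by
              exact mul_le_mul_of_nonneg_left this (le_of_lt hpos)
          _ = -(-⟪S.p, t₀⟫) * ‖t‖ := by ring
    · refine ⟨1, one_pos, ?_⟩
      intro t htL
      rcases eq_or_ne t 0 with rfl | htz
      · simp
      · exfalso
        have htn : ‖t‖ ≠ 0 := norm_ne_zero_iff.mpr htz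
        set u := ‖t‖⁻¹ • t with hu
        have huL : u ∈ S.linConeAt θs := hcone t htL _ (inv_nonneg.mpr (norm_nonneg t))
        have hun : ‖u‖ = 1 := by
          simp [hu, norm_smul, abs_of_nonneg (inv_nonneg.mpr (norm_nonneg t)),
            inv_mul_cancel₀ htn]
        exact hK'ne ⟨u, by simpa using hun, huL⟩
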